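/- arXiv:2304.05909 — 3 statements merged into one kernel-verified Lean document; each statement's English description precedes it below -/
import Mathlib

section
/- For every R > 0 there exists a Hilbert (orthonormal) basis (Ψ_n)_{n ∈ ℕ} of L²((-R,R)) such that for each n ∈ ℕ, Ψ_n is the equivalence class of the function x ↦ p_n(x)·e^x for some real polynomial p_n of degree exactly n. (This basis, obtained by Gram–Schmidt orthonormalization of the sequence x^n e^x, is called the polynomial-exponential basis.) -/
open MeasureTheory Polynomial Set InnerProductSpace

noncomputable section PolyExpAux

variable (R : ℝ)

def peMeas : Measure ℝ := volume.restrict (Set.Ioo (-R) R)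

instance : IsFiniteMeasure (peMeas R) := by
  constructor
  rw [peMeas, Measure.restrict_apply_univ, Real.volume_Ioo]
  exact ENNReal.ofReal_lt_top

lemma peCont (q : ℝ[X]) : Continuous fun x => q.eval x * Real.exp x :=
  q.continuous.mul Real.continuous_exp

lemma peMem (q : ℝ[X]) : MemLp (fun x => q.eval x * Real.exp x) 2 (peMeas R) := by
  obtain ⟨C, hC⟩ := (isCompact_Icc : IsCompact (Set.Icc (-R) R)).exists_bound_of_continuousOn
    (peCont q).continuousOn
  refine MemLp.of_bound ((peCont q).aestronglyMeasurable) C ?_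
  rw [peMeas]
  filter_upwards [ae_restrict_mem measurableSet_Ioo] with x hx
  exact hC x (Set.Ioo_subset_Icc_self hx)

def peT : ℝ[X] →ₗ[ℝ] Lp ℝ 2 (peMeas R) where
  toFun q := (peMem R q).toLp _
  map_add' q r := by
    have h : (fun x => (q + r).eval x * Real.exp x)
        = (fun x => q.eval x * Real.exp x) + fun x => r.eval x * Real.exp x := by
      funext x; simp [add_mul]
    simp only [h]
    exact MemLp.toLp_add _ _
  map_smul' c q := by
    have h : (fun x => (c • q).eval x * Real.exp x)
        = c • fun x => q.eval x * Real.exp x := by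
      funext x; simp [mul_assoc]
    simp only [h, RingHom.id_apply]
    exact MemLp.toLp_const_smul _ _

lemma peT_coe (q : ℝ[X]) : ⇑(peT R q) =ᵐ[peMeas R] fun x => q.eval x * Real.exp x :=
  MemLp.coeFn_toLp (peMem R q)

lemma peT_inj (hR : 0 < R) : Function.Injective (peT R) := by
  rw [injective_iff_map_eq_zero (peT R)]
  intro q hq
  by_contra hq0
  have h0 : ⇑(peT R q) =ᵐ[peMeas R] 0 := by rw [hq]; exact Lp.coeFn_zero _ _ _
  have h1 : ∀ᵐ x ∂(peMeas R), q.eval x * Real.exp x = 0 := (peT_coe R q).symm.trans h0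
  have h2 : ∀ᵐ x ∂(peMeas R), q.eval x = 0 := by
    filter_upwards [h1] with x hx
    rcases mul_eq_zero.1 hx with h | h
    · exact h
    · exact absurd h (Real.exp_ne_zero x)
  have hnull : peMeas R {x | ¬ q.eval x = 0} = 0 := h2
  have hroots : peMeas R {x | q.eval x = 0} = 0 := by
    have hfin : ({x | q.eval x = 0} : Set ℝ).Finite := Polynomial.finite_setOf_isRoot hq0
    have : volume {x : ℝ | q.eval x = 0} = 0 := hfin.measure_zero _
    exact le_antisymm (le_trans (Measure.restrict_le_self _) this.le) zero_le
  have htot : peMeas R Set.univ = 0 := by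
    have : (Set.univ : Set ℝ) = {x | q.eval x = 0} ∪ {x | ¬ q.eval x = 0} := by
      ext x; by_cases h : q.eval x = 0 <;> simp [h]
    rw [this]
    exact le_antisymm ((measure_union_le _ _).trans (by rw [hroots, hnull, add_zero])) zero_le
  rw [peMeas, Measure.restrict_apply_univ, Real.volume_Ioo] at htot
  have : (0:ℝ) < R - -R := by linarith
  exact absurd htot (by simp only [ENNReal.ofReal_eq_zero, not_le]; linarith)

def peF : ℕ → Lp ℝ 2 (peMeas R) := fun n => peT R ((X : ℝ[X]) ^ n)

lemma peF_li (hR : 0 < R) : LinearIndependent ℝ (peF R) := by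
  have hb : LinearIndependent ℝ fun n : ℕ => (X : ℝ[X]) ^ n := by
    have := (Polynomial.basisMonomials ℝ).linearIndependent
    rw [coe_basisMonomials] at this
    simpa [← Polynomial.X_pow_eq_monomial] using this
  exact hb.map' (peT R) (LinearMap.ker_eq_bot.2 (peT_inj R hR))

lemma peT_mem_span (q : ℝ[X]) : peT R q ∈ Submodule.span ℝ (Set.range (peF R)) := by
  have hq : q ∈ Submodule.span ℝ (Set.range fun n : ℕ => (X : ℝ[X]) ^ n) := by
    have h := (Polynomial.basisMonomials ℝ).span_eq
    rw [coe_basisMonomials] at h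
    simp only [← Polynomial.X_pow_eq_monomial] at h
    rw [h]; trivial
  have h2 := Submodule.mem_map_of_mem (f := peT R) hq
  rw [Submodule.map_span, ← Set.range_comp] at h2
  exact h2

lemma peDense (hR : 0 < R) :
    (Submodule.span ℝ (Set.range (peF R))).topologicalClosure = ⊤ := by
  set S := Submodule.span ℝ (Set.range (peF R)) with hS
  have hsub : (Lp.boundedContinuousFunction ℝ 2 (peMeas R) : Set (Lp ℝ 2 (peMeas R)))
      ⊆ (S.topologicalClosure : Set (Lp ℝ 2 (peMeas R))) := by
    intro g hg
    obtain ⟨g₀, hg₀⟩ := Lp.mem_boundedContinuousFunction_iff.1 hg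
    have hgae : ⇑g =ᵐ[peMeas R] ⇑g₀ := by
      have h1 : ⇑g = ⇑(g : ℝ →ₘ[peMeas R] ℝ) := rfl
      rw [h1, ← hg₀]
      exact ContinuousMap.coeFn_toAEEqFun _ _
    show g ∈ closure (S : Set (Lp ℝ 2 (peMeas R)))
    rw [Metric.mem_closure_iff]
    intro ε hε
    set K0 : ℝ := ((peMeas R) Set.univ ^ (2 : ENNReal).toReal⁻¹).toReal with hK0
    set K : ℝ := K0 * Real.exp R with hK
    have hK0nn : 0 ≤ K0 := ENNReal.toReal_nonneg
    have hKnn : 0 ≤ K := mul_nonneg hK0nn (Real.exp_pos R).le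
    set δ : ℝ := ε / (K + 1) with hδ
    have hδpos : 0 < δ := div_pos hε (by linarith)
    -- Weierstrass approximation of g₀ * exp(-x) on Icc (-R) R
    set h : C(Set.Icc (-R) R, ℝ) :=
      ⟨fun z => g₀ z * Real.exp (-(z : ℝ)),
        (g₀.continuous.comp continuous_subtype_val).mul
          ((Real.continuous_exp.comp continuous_neg).comp continuous_subtype_val)⟩ with hh
    have hmem : h ∈ closure (polynomialFunctions (Set.Icc (-R) R) : Set C(Set.Icc (-R) R, ℝ)) := by
      have := polynomialFunctions_closure_eq_top (-R) R
      have h2 : h ∈ (polynomialFunctions (Set.Icc (-R) R)).topologicalClosure := by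
        rw [this]; trivial
      exact h2
    obtain ⟨pf, hpfmem, hpfdist⟩ := Metric.mem_closure_iff.1 hmem δ hδpos
    rw [polynomialFunctions_coe] at hpfmem
    obtain ⟨q, hq⟩ := hpfmem
    refine ⟨peT R q, peT_mem_span R q, ?_⟩
    -- pointwise bound on Ioo
    have hpt : ∀ᵐ x ∂(peMeas R), ‖g x - (peT R q) x‖ ≤ Real.exp R * δ := by
      have hIoo : ∀ᵐ x ∂(peMeas R), x ∈ Set.Ioo (-R) R := by
        rw [show peMeas R = volume.restrict (Set.Ioo (-R) R) from rfl]
        exact ae_restrict_mem measurableSet_Ioo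
      filter_upwards [hIoo, hgae, peT_coe R q] with x hx hgx hTx
      rw [hgx, hTx]
      have hxIcc : x ∈ Set.Icc (-R) R := Set.Ioo_subset_Icc_self hx
      set z : Set.Icc (-R) R := ⟨x, hxIcc⟩
      have hz : dist (h z) (pf z) ≤ dist h pf := ContinuousMap.dist_apply_le_dist z
      have hzval : pf z = q.eval x := by rw [← hq]; rfl
      have hbound : |g₀ x * Real.exp (-x) - q.eval x| < δ := by
        have := lt_of_le_of_lt hz hpfdist
        rwa [Real.dist_eq, hzval] at this
      have hexp : Real.exp x ≤ Real.exp R := Real.exp_le_exp.2 hx.2.le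
      have key : g₀ x - q.eval x * Real.exp x
          = (g₀ x * Real.exp (-x) - q.eval x) * Real.exp x := by
        rw [sub_mul, mul_assoc, ← Real.exp_add]
        simp
      rw [Real.norm_eq_abs, key, abs_mul, abs_of_pos (Real.exp_pos x), mul_comm]
      exact mul_le_mul hexp hbound.le (abs_nonneg _) (Real.exp_pos R).le
    -- conclude via eLpNorm bound
    have hnorm : dist g (peT R q) ≤ K * δ := by
      rw [dist_eq_norm, Lp.norm_def]
      have hcongr : ⇑(g - peT R q) =ᵐ[peMeas R] fun x => g x - (peT R q) x :=
        Lp.coeFn_sub g (peT R q)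
      rw [eLpNorm_congr_ae hcongr]
      have hb := eLpNorm_le_of_ae_bound (p := 2) (μ := peMeas R)
        (f := fun x => g x - (peT R q) x) hpt
      have hfin : (peMeas R) Set.univ ^ (2 : ENNReal).toReal⁻¹ ≠ ⊤ :=
        (ENNReal.rpow_lt_top_of_nonneg (by norm_num) (measure_ne_top _ _)).ne
      calc (eLpNorm (fun x => g x - (peT R q) x) 2 (peMeas R)).toReal
          ≤ ((peMeas R) Set.univ ^ (2 : ENNReal).toReal⁻¹ * ENNReal.ofReal (Real.exp R * δ)).toReal := by
            apply ENNReal.toReal_mono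
            · exact ENNReal.mul_ne_top hfin ENNReal.ofReal_ne_top
            · exact hb
        _ = K0 * (Real.exp R * δ) := by
            rw [ENNReal.toReal_mul, ENNReal.toReal_ofReal
              (mul_nonneg (Real.exp_pos R).le hδpos.le)]
        _ = K * δ := by ring
    calc dist g (peT R q) ≤ K * δ := hnorm
      _ < (K + 1) * δ := by nlinarith
      _ = ε := by rw [hδ]; field_simp
  have hdense : Dense (Lp.boundedContinuousFunction ℝ 2 (peMeas R) : Set (Lp ℝ 2 (peMeas R))) :=
    Lp.boundedContinuousFunction_dense ℝ (peMeas R) (by norm_num)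
  refine eq_top_iff.2 fun x _ => ?_
  have hx : x ∈ closure (Lp.boundedContinuousFunction ℝ 2 (peMeas R) :
      Set (Lp ℝ 2 (peMeas R))) := hdense x
  exact closure_minimal hsub S.isClosed_topologicalClosure hx

/-- For every `R > 0` there is a Hilbert (orthonormal) basis `(Ψ_n)` of `L²((-R,R))`
(an orthonormal family with dense linear span) such that each `Ψ_n` is the class of
`x ↦ p_n(x)·e^x` for some real polynomial `p_n` of degree exactly `n`:
the polynomial-exponential basis. -/
theorem polyExp_hilbert_basis (R : ℝ) (hR : 0 < R) :
    ∃ (Ψ : ℕ → Lp ℝ 2 (volume.restrict (Set.Ioo (-R) R))) (p : ℕ → Polynomial ℝ),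
      Orthonormal ℝ Ψ ∧
      (Submodule.span ℝ (Set.range Ψ)).topologicalClosure = ⊤ ∧
      ∀ n : ℕ, (p n).degree = n ∧
        ⇑(Ψ n) =ᵐ[volume.restrict (Set.Ioo (-R) R)]
          fun x => (p n).eval x * Real.exp x := by
  classical
  set f := peF R with hf
  have hLI := peF_li R hR
  set Ψ : ℕ → Lp ℝ 2 (peMeas R) := gramSchmidtNormed ℝ f with hΨ
  have hGS : ∀ n : ℕ, ∃ r : ℝ[X], r.degree < (n : WithBot ℕ) ∧
      peT R r = f n - gramSchmidt ℝ f n := by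
    intro n
    have hv : f n - gramSchmidt ℝ f n ∈ Submodule.span ℝ (f '' Set.Iio n) := by
      rw [gramSchmidt_def ℝ f n, sub_sub_cancel]
      apply Submodule.sum_mem
      intro i hi
      have hmem := SetLike.coe_mem (Submodule.orthogonalProjectionOnto (ℝ ∙ gramSchmidt ℝ f i) (f n))
      have h1 : (ℝ ∙ gramSchmidt ℝ f i) ≤ Submodule.span ℝ (gramSchmidt ℝ f '' Set.Iio n) :=
        Submodule.span_mono (by
          rw [Set.singleton_subset_iff]
          exact ⟨i, Finset.mem_Iio.1 hi, rfl⟩)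
      have h2 := h1 hmem
      rwa [span_gramSchmidt_Iio ℝ f n] at h2
    have himg : f '' Set.Iio n = peT R '' ((fun i : ℕ => (X : ℝ[X]) ^ i) '' Set.Iio n) := by
      rw [Set.image_image]; rfl
    rw [himg, ← Submodule.map_span] at hv
    obtain ⟨r, hrmem, hreq⟩ := hv
    refine ⟨r, ?_, hreq⟩
    have hle : Submodule.span ℝ ((fun i : ℕ => (X : ℝ[X]) ^ i) '' Set.Iio n)
        ≤ Polynomial.degreeLT ℝ n := by
      rw [Submodule.span_le]
      rintro _ ⟨i, hi, rfl⟩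
      rw [SetLike.mem_coe, Polynomial.mem_degreeLT, Polynomial.degree_X_pow]
      exact_mod_cast hi
    exact (Polynomial.mem_degreeLT).1 (hle hrmem)
  choose r hrdeg hreq using hGS
  refine ⟨Ψ, fun n => (‖gramSchmidt ℝ f n‖)⁻¹ • ((X : ℝ[X]) ^ n - r n),
    gramSchmidtNormed_orthonormal hLI, ?_, fun n => ⟨?_, ?_⟩⟩
  · have hspan : Submodule.span ℝ (Set.range Ψ) = Submodule.span ℝ (Set.range f) := by
      rw [hΨ, ← Set.image_univ, span_gramSchmidtNormed, Set.image_univ, span_gramSchmidt]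
    change (Submodule.span ℝ (Set.range Ψ) : Submodule ℝ (Lp ℝ 2 (peMeas R))).topologicalClosure = ⊤
    rw [hspan]
    exact peDense R hR
  · have hc : (‖gramSchmidt ℝ f n‖)⁻¹ ≠ 0 :=
      inv_ne_zero (norm_ne_zero_iff.2 (gramSchmidt_ne_zero n hLI))
    show ((‖gramSchmidt ℝ f n‖)⁻¹ • ((X : ℝ[X]) ^ n - r n)).degree = (n : WithBot ℕ)
    rw [smul_eq_C_mul, Polynomial.degree_C_mul hc,
      Polynomial.degree_sub_eq_left_of_degree_lt, Polynomial.degree_X_pow]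
    rw [Polynomial.degree_X_pow]
    exact hrdeg n
  · have hTp : peT R ((‖gramSchmidt ℝ f n‖)⁻¹ • ((X : ℝ[X]) ^ n - r n)) = Ψ n := by
      rw [LinearMap.map_smul, LinearMap.map_sub, hreq n]
      have h1 : peT R ((X : ℝ[X]) ^ n) = f n := rfl
      rw [h1, hΨ]
      show _ = gramSchmidtNormed ℝ f n
      rw [gramSchmidtNormed]
      norm_num
    rw [← hTp]
    exact peT_coe R _
end PolyExpAux
end

section
/- Let R > 0 and let (Ψ_n)_{n ∈ ℕ} be an orthonormal family in L²((-R,R)) such that each Ψ_n is the class of x ↦ p_n(x)·e^x for a real polynomial p_n of degree exactly n. Then for all natural numbers m, n with m ≥ n, the inner product ⟨Ψ_n', Ψ_m⟩_{L²((-R,R))} = ∫_{-R}^{R} Ψ_n'(x) Ψ_m(x) dx equals 1 if m = n and equals 0 if m > n. -/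
open MeasureTheory

private lemma polyExp_integrable (R : ℝ) (a b : Polynomial ℝ) :
    IntegrableOn (fun x => a.eval x * Real.exp x * (b.eval x * Real.exp x))
      (Set.Ioo (-R) R) volume := by
  have hc : Continuous (fun x => a.eval x * Real.exp x * (b.eval x * Real.exp x)) := by fun_prop
  exact hc.integrableOn_Icc.mono_set Set.Ioo_subset_Icc_self

private lemma polyExp_inner (R : ℝ) (p : ℕ → Polynomial ℝ)
    (Ψ : ℕ → Lp ℝ 2 (volume.restrict (Set.Ioo (-R) R)))
    (horth : Orthonormal ℝ Ψ)
    (hΨ : ∀ n : ℕ, ⇑(Ψ n) =ᵐ[volume.restrict (Set.Ioo (-R) R)]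
      fun x => (p n).eval x * Real.exp x) (k m : ℕ) :
    (∫ x in Set.Ioo (-R) R, (p k).eval x * Real.exp x * ((p m).eval x * Real.exp x))
      = if k = m then 1 else 0 := by
  have h := orthonormal_iff_ite.mp horth k m
  rw [MeasureTheory.L2.inner_def] at h
  simp only [RCLike.inner_apply, starRingEnd_apply, star_trivial] at h
  rw [← h]
  refine integral_congr_ae ?_
  filter_upwards [hΨ k, hΨ m] with x hxk hxm
  rw [hxk, hxm]; ring

private lemma polyExp_step (R : ℝ) (p : ℕ → Polynomial ℝ)
    (hdeg : ∀ n : ℕ, (p n).degree = n)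
    (Ψ : ℕ → Lp ℝ 2 (volume.restrict (Set.Ioo (-R) R)))
    (horth : Orthonormal ℝ Ψ)
    (hΨ : ∀ n : ℕ, ⇑(Ψ n) =ᵐ[volume.restrict (Set.Ioo (-R) R)]
      fun x => (p n).eval x * Real.exp x)
    (m : ℕ) (r : Polynomial ℝ) (hr0 : r ≠ 0) (hkm : r.natDegree < m) :
    ∃ r' : Polynomial ℝ, r'.degree < r.degree ∧
      (∫ x in Set.Ioo (-R) R, r.eval x * Real.exp x * ((p m).eval x * Real.exp x))
        = ∫ x in Set.Ioo (-R) R, r'.eval x * Real.exp x * ((p m).eval x * Real.exp x) := by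
  set k := r.natDegree with hk
  have hpk : (p k).degree = k := hdeg k
  have hpk0 : p k ≠ 0 := by
    intro h; rw [h] at hpk; simp at hpk
  set c := r.leadingCoeff / (p k).leadingCoeff with hc
  have hlc : (p k).leadingCoeff ≠ 0 := Polynomial.leadingCoeff_ne_zero.mpr hpk0
  have hc0 : c ≠ 0 := div_ne_zero (Polynomial.leadingCoeff_ne_zero.mpr hr0) hlc
  refine ⟨r - Polynomial.C c * p k, ?_, ?_⟩
  · apply Polynomial.degree_sub_lt
    · rw [Polynomial.degree_C_mul hc0, hpk, Polynomial.degree_eq_natDegree hr0]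
    · exact hr0
    · rw [Polynomial.leadingCoeff_mul, Polynomial.leadingCoeff_C, hc,
        div_mul_cancel₀ _ hlc]
  · have hsplit : ∀ x : ℝ, r.eval x * Real.exp x * ((p m).eval x * Real.exp x)
        = (r - Polynomial.C c * p k).eval x * Real.exp x * ((p m).eval x * Real.exp x)
          + c * ((p k).eval x * Real.exp x * ((p m).eval x * Real.exp x)) := by
      intro x
      simp only [Polynomial.eval_sub, Polynomial.eval_mul, Polynomial.eval_C]
      ring
    rw [integral_congr_ae (Filter.EventuallyEq.of_eq (funext hsplit)),
      integral_add (polyExp_integrable R _ _)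
        ((polyExp_integrable R (p k) (p m)).const_mul c),
      integral_const_mul, polyExp_inner R p Ψ horth hΨ k m,
      if_neg (Nat.ne_of_lt hkm)]
    ring

private lemma polyExp_zero (R : ℝ) (p : ℕ → Polynomial ℝ)
    (hdeg : ∀ n : ℕ, (p n).degree = n)
    (Ψ : ℕ → Lp ℝ 2 (volume.restrict (Set.Ioo (-R) R)))
    (horth : Orthonormal ℝ Ψ)
    (hΨ : ∀ n : ℕ, ⇑(Ψ n) =ᵐ[volume.restrict (Set.Ioo (-R) R)]
      fun x => (p n).eval x * Real.exp x)
    (m : ℕ) :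
    ∀ (N : ℕ) (r : Polynomial ℝ), r.natDegree ≤ N → r.degree < (m : ℕ) →
      (∫ x in Set.Ioo (-R) R, r.eval x * Real.exp x * ((p m).eval x * Real.exp x)) = 0 := by
  intro N
  induction N using Nat.strong_induction_on with
  | _ N ih =>
    intro r hN hdm
    by_cases h0 : r = 0
    · simp [h0]
    have hnd : r.natDegree < m := (Polynomial.natDegree_lt_iff_degree_lt h0).mpr hdm
    obtain ⟨r', hlt, heq⟩ := polyExp_step R p hdeg Ψ horth hΨ m r h0 hnd
    rw [heq]
    by_cases h0' : r' = 0
    · simp [h0']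
    have h1 : r'.natDegree < r.natDegree := Polynomial.natDegree_lt_natDegree h0' hlt
    exact ih r'.natDegree (lt_of_lt_of_le h1 hN) r' le_rfl
      (hlt.trans hdm)

/-- Let `R > 0` and `(Ψ_n)` be an orthonormal family in `L²((-R,R))` with `Ψ_n`
the class of `x ↦ p_n(x)·e^x`, `deg p_n = n`.  Then for all `m ≥ n`,
`⟨Ψ_n', Ψ_m⟩ = ∫_{-R}^R Ψ_n'(x) Ψ_m(x) dx` equals `1` if `m = n` and `0` if `m > n`. -/
theorem polyExp_deriv_inner_products (R : ℝ) (hR : 0 < R)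
    (p : ℕ → Polynomial ℝ) (hdeg : ∀ n : ℕ, (p n).degree = n)
    (Ψ : ℕ → Lp ℝ 2 (volume.restrict (Set.Ioo (-R) R)))
    (horth : Orthonormal ℝ Ψ)
    (hΨ : ∀ n : ℕ, ⇑(Ψ n) =ᵐ[volume.restrict (Set.Ioo (-R) R)]
      fun x => (p n).eval x * Real.exp x)
    (m n : ℕ) (hmn : n ≤ m) :
    ∫ x in Set.Ioo (-R) R,
        deriv (fun y : ℝ => (p n).eval y * Real.exp y) x
          * ((p m).eval x * Real.exp x)
      = if m = n then 1 else 0 := by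
  have hpn0 : p n ≠ 0 := by
    intro h
    have := hdeg n
    rw [h] at this; simp at this
  have hderiv : ∀ x : ℝ,
      deriv (fun y : ℝ => (p n).eval y * Real.exp y) x
        = (Polynomial.derivative (p n)).eval x * Real.exp x
          + (p n).eval x * Real.exp x := by
    intro x
    exact (((p n).hasDerivAt x).mul (Real.hasDerivAt_exp x)).deriv
  have hsplit : ∀ x : ℝ,
      deriv (fun y : ℝ => (p n).eval y * Real.exp y) x * ((p m).eval x * Real.exp x)
        = (Polynomial.derivative (p n)).eval x * Real.exp x * ((p m).eval x * Real.exp x)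
          + (p n).eval x * Real.exp x * ((p m).eval x * Real.exp x) := by
    intro x; rw [hderiv x]; ring
  rw [integral_congr_ae (Filter.EventuallyEq.of_eq (funext hsplit)),
    integral_add (polyExp_integrable R _ _) (polyExp_integrable R _ _)]
  have hdlt : (Polynomial.derivative (p n)).degree < (m : ℕ) := by
    calc (Polynomial.derivative (p n)).degree < (p n).degree :=
          Polynomial.degree_derivative_lt hpn0
      _ = (n : ℕ) := hdeg n
      _ ≤ (m : ℕ) := by exact_mod_cast hmn
  rw [polyExp_zero R p hdeg Ψ horth hΨ m (Polynomial.derivative (p n)).natDegree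
      (Polynomial.derivative (p n)) le_rfl hdlt,
    polyExp_inner R p Ψ horth hΨ n m]
  by_cases h : m = n
  · simp [h]
  · simp [h, Ne.symm h]
end

section
/- Let R > 0 and let (Ψ_n)_{n ∈ ℕ} be an orthonormal family in L²((-R,R)) such that each Ψ_n is the class of x ↦ p_n(x)·e^x for a real polynomial p_n of degree exactly n. Then for every N ≥ 1, the N×N real matrix M with entries M_{m n} = ∫_{-R}^{R} Ψ_n'(x) Ψ_m(x) dx, 0 ≤ m, n ≤ N−1, has determinant 1 and in particular is invertible. -/
open MeasureTheory

/-- Any polynomial of degree `< n` is a linear combination of `p 0, …, p (n-1)`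
when `deg (p k) = k`. -/
lemma polyExp_rep (p : ℕ → Polynomial ℝ) (hdeg : ∀ n : ℕ, (p n).degree = n) :
    ∀ n : ℕ, ∀ q : Polynomial ℝ, q.degree < n →
      ∃ c : ℕ → ℝ, q = ∑ k ∈ Finset.range n, c k • p k := by
  intro n
  induction n with
  | zero =>
    intro q hq
    refine ⟨0, ?_⟩
    have h0 : q = 0 := by simpa using hq
    simp [h0]
  | succ n ih =>
    intro q hq
    by_cases h : q.degree < n
    · obtain ⟨c, hc⟩ := ih q h
      refine ⟨Function.update c n 0, ?_⟩
      rw [Finset.sum_range_succ, Function.update_self]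
      rw [Finset.sum_congr rfl (fun k hk => by
        rw [Function.update_of_ne (Finset.mem_range.mp hk).ne])]
      simpa using hc
    · have hq0 : q ≠ 0 := by
        intro h0
        exact h (by simp [h0, Polynomial.degree_zero, bot_lt_iff_ne_bot])
      have hdn : q.degree = (n : WithBot ℕ) := by
        have h1 : q.degree ≤ n := by
          rw [← Polynomial.natDegree_le_iff_degree_le]
          have := (Polynomial.natDegree_lt_iff_degree_lt hq0).mpr hq
          omega
        exact le_antisymm h1 (not_lt.mp h)
      have hpn0 : p n ≠ 0 := fun h0 => by
        have := hdeg n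
        rw [h0] at this
        simp at this
      have hlc : (p n).leadingCoeff ≠ 0 := Polynomial.leadingCoeff_ne_zero.mpr hpn0
      set a : ℝ := q.leadingCoeff / (p n).leadingCoeff with ha
      have ha0 : a ≠ 0 := div_ne_zero (Polynomial.leadingCoeff_ne_zero.mpr hq0) hlc
      have hsm : a • p n = Polynomial.C a * p n := by
        rw [Polynomial.smul_eq_C_mul]
      have hdsm : (a • p n).degree = (n : WithBot ℕ) := by
        rw [hsm, Polynomial.degree_C_mul ha0, hdeg n]
      have hlcsm : (a • p n).leadingCoeff = q.leadingCoeff := by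
        rw [hsm, Polynomial.leadingCoeff_mul, Polynomial.leadingCoeff_C, ha]
        field_simp
      have hr : (q - a • p n).degree < n := by
        rcases eq_or_ne (q - a • p n) 0 with h0 | h0
        · rw [h0, Polynomial.degree_zero]
          exact bot_lt_iff_ne_bot.mpr (by simp)
        · have := Polynomial.degree_sub_lt (hdn.trans hdsm.symm) hq0 hlcsm.symm
          rwa [hdn] at this
      obtain ⟨c, hc⟩ := ih _ hr
      refine ⟨Function.update c n a, ?_⟩
      rw [Finset.sum_range_succ, Function.update_self]
      rw [Finset.sum_congr rfl (fun k hk => by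
        rw [Function.update_of_ne (Finset.mem_range.mp hk).ne])]
      rw [← hc]; ring

/-- Let `R > 0` and `(Ψ_n)` be an orthonormal family in `L²((-R,R))` with `Ψ_n`
the class of `x ↦ p_n(x)·e^x`, `deg p_n = n`.  For every `N ≥ 1`, the `N×N` matrix
`M` with entries `M_{m n} = ∫_{-R}^R Ψ_n'(x) Ψ_m(x) dx`, `0 ≤ m, n ≤ N−1`, has
determinant `1`; in particular it is invertible. -/
theorem polyExp_deriv_matrix_invertible (R : ℝ) (hR : 0 < R)
    (p : ℕ → Polynomial ℝ) (hdeg : ∀ n : ℕ, (p n).degree = n)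
    (Ψ : ℕ → Lp ℝ 2 (volume.restrict (Set.Ioo (-R) R)))
    (horth : Orthonormal ℝ Ψ)
    (hΨ : ∀ n : ℕ, ⇑(Ψ n) =ᵐ[volume.restrict (Set.Ioo (-R) R)]
      fun x => (p n).eval x * Real.exp x)
    (N : ℕ) (hN : 1 ≤ N)
    (M : Matrix (Fin N) (Fin N) ℝ)
    (hM : ∀ m n : Fin N,
      M m n = ∫ x in Set.Ioo (-R) R,
        deriv (fun y : ℝ => (p (n : ℕ)).eval y * Real.exp y) x
          * ((p (m : ℕ)).eval x * Real.exp x)) :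
    M.det = 1 ∧ IsUnit M := by
  -- integrability of polynomial·exp products
  have hint : ∀ P : Polynomial ℝ, Integrable (fun x => P.eval x * Real.exp x) (volume.restrict (Set.Ioo (-R) R)) := by
    intro P
    exact ((P.continuous_aeval.mul Real.continuous_exp).integrableOn_Icc).mono_set
      Set.Ioo_subset_Icc_self
  have hint2 : ∀ P Q : Polynomial ℝ,
      Integrable (fun x => (P.eval x * Real.exp x) * (Q.eval x * Real.exp x)) (volume.restrict (Set.Ioo (-R) R)) := by
    intro P Q
    exact (((P.continuous_aeval.mul Real.continuous_exp).mul
      (Q.continuous_aeval.mul Real.continuous_exp)).integrableOn_Icc).mono_set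
      Set.Ioo_subset_Icc_self
  -- orthonormality in integral form
  have horthI : ∀ k m : ℕ,
      (∫ x, ((p k).eval x * Real.exp x) * ((p m).eval x * Real.exp x) ∂(volume.restrict (Set.Ioo (-R) R)))
        = if k = m then 1 else 0 := by
    intro k m
    have h1 : (inner ℝ (Ψ k) (Ψ m) : ℝ) = if k = m then (1:ℝ) else 0 :=
      orthonormal_iff_ite.mp horth k m
    rw [MeasureTheory.L2.inner_def] at h1
    rw [← h1]
    refine integral_congr_ae ?_
    filter_upwards [hΨ k, hΨ m] with x hk hm
    simp [hk, hm, RCLike.inner_apply, mul_comm]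
  -- key: integral of (q·exp)·(p m·exp) for q in span of p 0,…,p (n-1)
  have hkey : ∀ (m : ℕ) (q : Polynomial ℝ) (c : ℕ → ℝ) (n : ℕ),
      q = ∑ k ∈ Finset.range n, c k • p k →
      (∫ x, (q.eval x * Real.exp x) * ((p m).eval x * Real.exp x) ∂(volume.restrict (Set.Ioo (-R) R)))
        = ∑ k ∈ Finset.range n, c k * (if k = m then 1 else 0) := by
    intro m q c n hcq
    have heq : (fun x => (q.eval x * Real.exp x) * ((p m).eval x * Real.exp x))
        = fun x => ∑ k ∈ Finset.range n,
            c k * (((p k).eval x * Real.exp x) * ((p m).eval x * Real.exp x)) := by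
      funext x
      rw [hcq]
      simp [Polynomial.eval_finset_sum, Finset.sum_mul]
      ring_nf
      exact Finset.sum_congr rfl fun k _ => by ring
    rw [heq, integral_finset_sum]
    · exact Finset.sum_congr rfl fun k _ => by
        rw [integral_const_mul, horthI k m]
    · intro k _
      exact (hint2 (p k) (p m)).const_mul _
  -- M m n = ∫ ((p n)' + p n)·exp · (p m)·exp
  have hMval : ∀ m n : Fin N,
      M m n = ∫ x, ((((p (n:ℕ)).derivative) + p (n:ℕ)).eval x * Real.exp x)
          * ((p (m:ℕ)).eval x * Real.exp x) ∂(volume.restrict (Set.Ioo (-R) R)) := by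
    intro m n
    rw [hM m n]
    refine integral_congr_ae (Filter.Eventually.of_forall fun x => ?_)
    have h : HasDerivAt (fun y : ℝ => (p (n:ℕ)).eval y * Real.exp y) _ x :=
      ((p (n:ℕ)).hasDerivAt x).mul (Real.hasDerivAt_exp x)
    simp only [h.deriv, Polynomial.eval_add]
    ring
  -- off-diagonal below: m > n ⇒ M m n = 0
  have hlow : ∀ m n : Fin N, (n:ℕ) < (m:ℕ) → M m n = 0 := by
    intro m n hmn
    have hdq : (((p (n:ℕ)).derivative) + p (n:ℕ)).degree < (m:ℕ) := by
      refine lt_of_le_of_lt (Polynomial.degree_add_le _ _) ?_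
      rw [max_lt_iff]
      constructor
      · exact lt_of_le_of_lt (Polynomial.degree_derivative_le)
          (by rw [hdeg]; exact_mod_cast hmn)
      · rw [hdeg]; exact_mod_cast hmn
    obtain ⟨c, hc⟩ := polyExp_rep p hdeg (m:ℕ) _ hdq
    rw [hMval m n, hkey (m:ℕ) _ c (m:ℕ) hc]
    refine Finset.sum_eq_zero fun k hk => ?_
    rw [if_neg (Finset.mem_range.mp hk).ne, mul_zero]
  -- diagonal: M n n = 1
  have hdiag : ∀ n : Fin N, M n n = 1 := by
    intro n
    rw [hMval n n]
    have hsplit : (fun x => ((((p (n:ℕ)).derivative) + p (n:ℕ)).eval x * Real.exp x)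
          * ((p (n:ℕ)).eval x * Real.exp x))
        = fun x => (((p (n:ℕ)).derivative.eval x * Real.exp x)
            * ((p (n:ℕ)).eval x * Real.exp x))
          + (((p (n:ℕ)).eval x * Real.exp x) * ((p (n:ℕ)).eval x * Real.exp x)) := by
      funext x; simp; ring
    rw [hsplit, integral_add (hint2 _ _) (hint2 _ _)]
    have hp0 : p (n:ℕ) ≠ 0 := by
      intro h0
      have := hdeg (n:ℕ)
      rw [h0] at this
      simp at this
    have hd : ((p (n:ℕ)).derivative).degree < ((n:ℕ) : WithBot ℕ) := by
      have := Polynomial.degree_derivative_lt hp0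
      rwa [hdeg] at this
    obtain ⟨c, hc⟩ := polyExp_rep p hdeg (n:ℕ) _ hd
    rw [hkey (n:ℕ) _ c (n:ℕ) hc, horthI (n:ℕ) (n:ℕ)]
    have : ∑ k ∈ Finset.range (n:ℕ), c k * (if k = (n:ℕ) then (1:ℝ) else 0) = 0 :=
      Finset.sum_eq_zero fun k hk => by
        rw [if_neg (Finset.mem_range.mp hk).ne, mul_zero]
    rw [this]
    simp
  -- conclude
  have htri : M.BlockTriangular id := by
    intro i j hij
    exact hlow i j hij
  have hdet : M.det = 1 := by
    rw [Matrix.det_of_upperTriangular htri]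
    exact Finset.prod_eq_one fun i _ => hdiag i
  exact ⟨hdet, (Matrix.isUnit_iff_isUnit_det M).mpr (by rw [hdet]; exact isUnit_one)⟩
end
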